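/- arXiv:1206.4172 — 2 statements merged into one kernel-verified Lean document; each statement's English description precedes it below -/
import Mathlib

section
/- If {ψ_k}_{k=1}^∞ is an orthonormal basis of eigenfunctions of the operator Cψ = Σ_{i=1}^m (ψ, y_i) y_i with eigenvalues λ_1 ≥ λ_2 ≥ ... ≥ 0, then for each l ≤ m the POD approximation error satisfies Σ_{i=1}^m ‖y_i − Σ_{j=1}^l (y_i, ψ_j)ψ_j‖² = Σ_{j=l+1}^m λ_j. -/
set_option maxHeartbeats 1000000


open MeasureTheory RealInnerProductSpace

/-- POD error formula: if `{ψ_k}` is an orthonormal basis of eigenfunctions of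
the covariance operator `Cψ = Σᵢ (ψ, yᵢ)yᵢ` with eigenvalues
`λ₁ ≥ λ₂ ≥ … ≥ 0`, `λ_j = 0` for `j > m`, then for each `l ≤ m`,
`Σᵢ ‖yᵢ − Σ_{j≤l} (yᵢ, ψⱼ)ψⱼ‖² = Σ_{j=l+1}^m λⱼ`. -/
theorem pod_error_formula
    (d m : ℕ) (Ω : Set (EuclideanSpace ℝ (Fin d))) (hΩ : Bornology.IsBounded Ω)
    (y : Fin m → Lp ℝ 2 (volume.restrict Ω))
    (hli : LinearIndependent ℝ y)
    (ψ : ℕ → Lp ℝ 2 (volume.restrict Ω))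
    (hON : Orthonormal ℝ ψ)
    (htotal : (Submodule.span ℝ (Set.range ψ)).topologicalClosure = ⊤)
    (lam : ℕ → ℝ)
    (heig : ∀ k, (∑ i, ⟪ψ k, y i⟫ • y i) = lam k • ψ k)
    (hdec : Antitone lam) (hpos : ∀ k, 0 ≤ lam k)
    (hzero : ∀ k, m ≤ k → lam k = 0) :
    ∀ l ≤ m,
      ∑ i, ‖y i - ∑ j ∈ Finset.range l, ⟪y i, ψ j⟫ • ψ j‖ ^ 2
        = ∑ j ∈ Finset.Ico l m, lam j := by
  intro l hl
  -- λ_k = Σ_i ⟪ψ k, y i⟫²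
  have hlam : ∀ k, ∑ i, ⟪ψ k, y i⟫ ^ 2 = lam k := by
    intro k
    have h := congrArg (fun v => ⟪v, ψ k⟫) (heig k)
    simp only [sum_inner, real_inner_smul_left] at h
    have hψ : ⟪ψ k, ψ k⟫ = (1 : ℝ) := by
      have := hON.1 k
      rw [real_inner_self_eq_norm_sq, this]; norm_num
    rw [hψ, mul_one] at h
    calc ∑ i, ⟪ψ k, y i⟫ ^ 2 = ∑ i, ⟪ψ k, y i⟫ * ⟪y i, ψ k⟫ := by
          refine Finset.sum_congr rfl fun i _ => ?_
          rw [sq, real_inner_comm (y i) (ψ k)]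
      _ = lam k := h
  -- coefficients vanish for k ≥ m
  have hcoef : ∀ (i : Fin m) k, m ≤ k → ⟪y i, ψ k⟫ = 0 := by
    intro i k hk
    have h0 : ∑ j, ⟪ψ k, y j⟫ ^ 2 = 0 := by rw [hlam k, hzero k hk]
    have := (Finset.sum_eq_zero_iff_of_nonneg (fun j _ => sq_nonneg _)).1 h0 i
      (Finset.mem_univ i)
    have h1 : ⟪ψ k, y i⟫ = 0 := pow_eq_zero_iff (two_ne_zero) |>.1 this
    rw [real_inner_comm] at h1; exact h1
  -- each y i is the sum of its first m Fourier coefficients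
  have hrep : ∀ i : Fin m, y i = ∑ j ∈ Finset.range m, ⟪y i, ψ j⟫ • ψ j := by
    intro i
    set z := y i - ∑ j ∈ Finset.range m, ⟪y i, ψ j⟫ • ψ j with hz
    have hzperp : ∀ k, ⟪z, ψ k⟫ = 0 := by
      intro k
      have hsum : ⟪∑ j ∈ Finset.range m, ⟪y i, ψ j⟫ • ψ j, ψ k⟫
          = if k ∈ Finset.range m then ⟪y i, ψ k⟫ else 0 := by
        rw [sum_inner]
        by_cases hk : k ∈ Finset.range m
        · rw [if_pos hk, Finset.sum_eq_single k]
          · rw [real_inner_smul_left]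
            have : ⟪ψ k, ψ k⟫ = (1:ℝ) := by
              have := hON.1 k
              rw [real_inner_self_eq_norm_sq, this]; norm_num
            rw [this, mul_one]
          · intro j _ hj
            rw [real_inner_smul_left, hON.2 hj, mul_zero]
          · intro h; exact absurd hk h
        · rw [if_neg hk]
          refine Finset.sum_eq_zero fun j hj => ?_
          have : j ≠ k := fun h => hk (h ▸ hj)
          rw [real_inner_smul_left, hON.2 this, mul_zero]
      rw [hz, inner_sub_left, hsum]
      by_cases hk : k ∈ Finset.range m
      · rw [if_pos hk, sub_self]
      · rw [if_neg hk, hcoef i k (Nat.le_of_not_lt (fun h => hk (Finset.mem_range.2 h))),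
          sub_zero]
    have hmem : z ∈ (Submodule.span ℝ (Set.range ψ))ᗮ := by
      have hle : Submodule.span ℝ (Set.range ψ) ≤ (ℝ ∙ z)ᗮ := by
        rw [Submodule.span_le]
        rintro _ ⟨k, rfl⟩
        exact Submodule.mem_orthogonal_singleton_iff_inner_right.2 (hzperp k)
      have := Submodule.orthogonal_le hle
      exact this (Submodule.le_orthogonal_orthogonal _
        (Submodule.mem_span_singleton_self z))
    have hbot : (Submodule.span ℝ (Set.range ψ))ᗮ = ⊥ :=
      Submodule.topologicalClosure_eq_top_iff.1 htotal
    have : z = 0 := by rw [hbot] at hmem; exact hmem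
    rw [hz, sub_eq_zero] at this
    exact this
  -- rewrite the error and compute its norm
  have hkey : ∀ i : Fin m,
      ‖y i - ∑ j ∈ Finset.range l, ⟪y i, ψ j⟫ • ψ j‖ ^ 2
        = ∑ j ∈ Finset.Ico l m, ⟪y i, ψ j⟫ ^ 2 := by
    intro i
    set c : ℕ → ℝ := fun j => ⟪y i, ψ j⟫ with hc
    have hsplit : y i - ∑ j ∈ Finset.range l, c j • ψ j
        = ∑ j ∈ Finset.Ico l m, c j • ψ j := by
      have h := hrep i
      rw [h, Finset.range_eq_Ico, ← Finset.sum_Ico_consecutive _ (Nat.zero_le l) hl,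
        ← Finset.range_eq_Ico, add_sub_cancel_left]
    rw [hsplit]
    have := hON.inner_sum c c (Finset.Ico l m)
    rw [← real_inner_self_eq_norm_sq, this]
    refine Finset.sum_congr rfl fun j _ => ?_
    simp [sq, hc]
  calc ∑ i, ‖y i - ∑ j ∈ Finset.range l, ⟪y i, ψ j⟫ • ψ j‖ ^ 2
      = ∑ i, ∑ j ∈ Finset.Ico l m, ⟪y i, ψ j⟫ ^ 2 := by
        exact Finset.sum_congr rfl fun i _ => hkey i
    _ = ∑ j ∈ Finset.Ico l m, ∑ i, ⟪y i, ψ j⟫ ^ 2 := Finset.sum_comm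
    _ = ∑ j ∈ Finset.Ico l m, lam j := by
        refine Finset.sum_congr rfl fun j _ => ?_
        rw [← hlam j]
        exact Finset.sum_congr rfl fun i _ => by rw [real_inner_comm]
end

section
/- Among all linear unbiased predictors c ∈ ℝ^n satisfying Fᵀc = f(x), the weights c(x) obtained from [[R, F],[Fᵀ, 0]](c, μ)ᵀ = (r(x), f(x))ᵀ minimize the quadratic form cᵀRc − 2cᵀr(x): for any c with Fᵀc = f(x), one has c(x)ᵀRc(x) − 2c(x)ᵀr(x) ≤ cᵀRc − 2cᵀr(x). -/
open Matrix

/-- Among all unbiased weights `c` with `Fᵀc = f`, the KKT solution minimizes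
the quadratic form `cᵀRc − 2cᵀr`. -/
theorem kriging_weights_optimal
    (n K : ℕ) (hK : K ≤ n)
    (R : Matrix (Fin n) (Fin n) ℝ) (hR : R.PosDef)
    (F : Matrix (Fin n) (Fin K) ℝ) (hF : F.rank = K)
    (r : Fin n → ℝ) (f : Fin K → ℝ)
    (c₀ : Fin n → ℝ) (μ₀ : Fin K → ℝ)
    (hsol : (Matrix.fromBlocks R F Fᵀ (0 : Matrix (Fin K) (Fin K) ℝ)) *ᵥ
      Sum.elim c₀ μ₀ = Sum.elim r f) :
    ∀ c : Fin n → ℝ, Fᵀ *ᵥ c = f →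
      c₀ ⬝ᵥ (R *ᵥ c₀) - 2 * (c₀ ⬝ᵥ r) ≤ c ⬝ᵥ (R *ᵥ c) - 2 * (c ⬝ᵥ r) := by
  intro c hc
  rw [Matrix.fromBlocks_mulVec] at hsol
  have h1 : R *ᵥ c₀ + F *ᵥ μ₀ = r := funext fun i => congrFun hsol (Sum.inl i)
  have h2 : Fᵀ *ᵥ c₀ = f := by
    have := funext fun i => congrFun hsol (Sum.inr i)
    simpa using this
  set d : Fin n → ℝ := c - c₀ with hd
  have hFd : Fᵀ *ᵥ d = 0 := by
    rw [hd, Matrix.mulVec_sub, hc, h2, sub_self]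
  have hpos : 0 ≤ d ⬝ᵥ (R *ᵥ d) := by
    rcases eq_or_ne d 0 with h | h
    · simp [h]
    · exact le_of_lt (by simpa using hR.dotProduct_mulVec_pos h)
  -- d ⬝ᵥ (F *ᵥ μ₀) = 0
  have hdF : d ⬝ᵥ (F *ᵥ μ₀) = 0 := by
    rw [Matrix.dotProduct_mulVec, ← Matrix.mulVec_transpose, hFd, zero_dotProduct]
  have hdr : d ⬝ᵥ r = d ⬝ᵥ (R *ᵥ c₀) := by
    rw [← h1, dotProduct_add, hdF, add_zero]
  have hsym : c₀ ⬝ᵥ (R *ᵥ c) = c ⬝ᵥ (R *ᵥ c₀) := by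
    have hsymm : Rᵀ = R := by simpa using hR.1.eq
    rw [Matrix.dotProduct_mulVec, ← Matrix.mulVec_transpose, hsymm,
      dotProduct_comm]
  have hexp : d ⬝ᵥ (R *ᵥ d)
      = c ⬝ᵥ (R *ᵥ c) - c ⬝ᵥ (R *ᵥ c₀) - c₀ ⬝ᵥ (R *ᵥ c) + c₀ ⬝ᵥ (R *ᵥ c₀) := by
    rw [hd, Matrix.mulVec_sub, sub_dotProduct, dotProduct_sub,
      dotProduct_sub]
    ring
  have hdr' : d ⬝ᵥ r = c ⬝ᵥ r - c₀ ⬝ᵥ r := by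
    rw [hd, sub_dotProduct]
  have hdr'' : d ⬝ᵥ (R *ᵥ c₀) = c ⬝ᵥ (R *ᵥ c₀) - c₀ ⬝ᵥ (R *ᵥ c₀) := by
    rw [hd, sub_dotProduct]
  nlinarith [hpos, hexp, hdr, hdr', hdr'', hsym]
end
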